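/- Under the operator setup below, κ is invertible and the operators satisfy φ∘φ' − φ'∘φ = (κ − κ⁻¹)/(q − q⁻¹), κ∘φ = q²·φ∘κ, and κ∘φ' = q⁻²·φ'∘κ; that is, (φ, φ', κ) defines a representation of U_q(sl₂) on W with E ↦ φ, F ↦ φ', K ↦ κ. -/

import Mathlib

noncomputable section

/-- The vector space with basis `ψ(l,λ)`, `l ∈ ℕ₀`, `λ ∈ ℂ∖{0}`. -/
abbrev Wsp : Type := (ℕ × ℂˣ) →₀ ℂ

/-- The basis vector `ψ(l,λ)`. -/
def psi (l : ℕ) (u : ℂˣ) : Wsp := Finsupp.single (l, u) 1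

/-- The q-number `[l] = (q^l − q^(−l))/(q − q⁻¹)`. -/
def qnum (q : ℂˣ) (l : ℕ) : ℂ := ((q : ℂ) ^ l - (q : ℂ)⁻¹ ^ l) / ((q : ℂ) - (q : ℂ)⁻¹)

/-- `φ(ψ(l,λ)) = −(q^l[l]/(q−q⁻¹))·ψ(l−1, q²λ) + αq(q^(2l) − λ)·ψ(l, q²λ)
  + q²(q^(2l) − λ²)·ψ(l+1, q²λ)` (the `ψ(l−1,·)` term has coefficient `[0] = 0` for `l = 0`). -/
def phi (q : ℂˣ) (α : ℂ) : Wsp →ₗ[ℂ] Wsp :=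
  Finsupp.lsum ℂ fun i => LinearMap.toSpanSingleton ℂ Wsp
    ((-((q : ℂ) ^ i.1 * qnum q i.1 / ((q : ℂ) - (q : ℂ)⁻¹))) • psi (i.1 - 1) (q ^ 2 * i.2) +
     (α * (q : ℂ) * ((q : ℂ) ^ (2 * i.1) - (i.2 : ℂ))) • psi i.1 (q ^ 2 * i.2) +
     ((q : ℂ) ^ 2 * ((q : ℂ) ^ (2 * i.1) - (i.2 : ℂ) ^ 2)) • psi (i.1 + 1) (q ^ 2 * i.2))

/-- `φ'(ψ(l,λ)) = λ⁻¹·(q^(1−l)[l]/(q−q⁻¹))·ψ(l−1, q⁻²λ)`. -/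
def phi' (q : ℂˣ) : Wsp →ₗ[ℂ] Wsp :=
  Finsupp.lsum ℂ fun i => LinearMap.toSpanSingleton ℂ Wsp
    ((((i.2 : ℂ))⁻¹ * ((q : ℂ) ^ ((1 : ℤ) - (i.1 : ℤ)) * qnum q i.1 / ((q : ℂ) - (q : ℂ)⁻¹))) •
      psi (i.1 - 1) ((q ^ 2)⁻¹ * i.2))

/-- `κ(ψ(l,λ)) = λ·ψ(l,λ)`. -/
def kappa : Wsp →ₗ[ℂ] Wsp :=
  Finsupp.lsum ℂ fun i => LinearMap.toSpanSingleton ℂ Wsp (((i.2 : ℂ)) • psi i.1 i.2)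

/-- `κ⁻¹(ψ(l,λ)) = λ⁻¹·ψ(l,λ)`. -/
def kappaInv : Wsp →ₗ[ℂ] Wsp :=
  Finsupp.lsum ℂ fun i => LinearMap.toSpanSingleton ℂ Wsp (((i.2 : ℂ))⁻¹ • psi i.1 i.2)



lemma single_eq (l : ℕ) (u : ℂˣ) (b : ℂ) : (Finsupp.single (l, u) b : Wsp) = b • psi l u := by
  rw [psi, Finsupp.smul_single, smul_eq_mul, mul_one]

lemma phi_psi (q : ℂˣ) (α : ℂ) (l : ℕ) (u : ℂˣ) :
    phi q α (psi l u) =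
      (-((q : ℂ) ^ l * qnum q l / ((q : ℂ) - (q : ℂ)⁻¹))) • psi (l - 1) (q ^ 2 * u) +
      (α * (q : ℂ) * ((q : ℂ) ^ (2 * l) - (u : ℂ))) • psi l (q ^ 2 * u) +
      ((q : ℂ) ^ 2 * ((q : ℂ) ^ (2 * l) - (u : ℂ) ^ 2)) • psi (l + 1) (q ^ 2 * u) := by
  rw [phi, psi, Finsupp.lsum_single, LinearMap.toSpanSingleton_apply, one_smul]

lemma phi'_psi (q : ℂˣ) (l : ℕ) (u : ℂˣ) :
    phi' q (psi l u) =
      ((((u : ℂ))⁻¹ * ((q : ℂ) ^ ((1 : ℤ) - (l : ℤ)) * qnum q l / ((q : ℂ) - (q : ℂ)⁻¹)))) •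
        psi (l - 1) ((q ^ 2)⁻¹ * u) := by
  rw [phi', psi, Finsupp.lsum_single, LinearMap.toSpanSingleton_apply, one_smul]

lemma kappa_psi (l : ℕ) (u : ℂˣ) : kappa (psi l u) = ((u : ℂ)) • psi l u := by
  rw [kappa, psi, Finsupp.lsum_single, LinearMap.toSpanSingleton_apply, one_smul]; rfl

lemma kappaInv_psi (l : ℕ) (u : ℂˣ) : kappaInv (psi l u) = ((u : ℂ))⁻¹ • psi l u := by
  rw [kappaInv, psi, Finsupp.lsum_single, LinearMap.toSpanSingleton_apply, one_smul]; rfl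

set_option maxHeartbeats 1600000 in
/-- `κ` is invertible (with inverse `κ⁻¹`), and the operators satisfy
`φ∘φ' − φ'∘φ = (κ − κ⁻¹)/(q − q⁻¹)`, `κ∘φ = q²·φ∘κ` and `κ∘φ' = q⁻²·φ'∘κ`;
i.e. `(φ, φ', κ)` is a representation of `U_q(sl₂)` on `W`. -/
theorem stmt13 (q : ℂˣ) (hq' : ∀ k : ℕ, 0 < k → (q : ℂ) ^ k ≠ 1) (α : ℂ) :
    kappa ∘ₗ kappaInv = LinearMap.id ∧ kappaInv ∘ₗ kappa = LinearMap.id ∧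
    phi q α ∘ₗ phi' q - phi' q ∘ₗ phi q α =
      ((q : ℂ) - (q : ℂ)⁻¹)⁻¹ • (kappa - kappaInv) ∧
    kappa ∘ₗ phi q α = (q : ℂ) ^ 2 • (phi q α ∘ₗ kappa) ∧
    kappa ∘ₗ phi' q = ((q : ℂ) ^ 2)⁻¹ • (phi' q ∘ₗ kappa) := by
  have hq0 : (q : ℂ) ≠ 0 := q.ne_zero
  have hqq : (q : ℂ) - (q : ℂ)⁻¹ ≠ 0 := by
    intro h
    apply hq' 2 (by norm_num)
    have : (q : ℂ) = (q : ℂ)⁻¹ := by linear_combination h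
    field_simp at this
    rw [sq]; linear_combination this
  have h1 : kappa ∘ₗ kappaInv = LinearMap.id := by
    apply Finsupp.lhom_ext
    rintro ⟨l, u⟩ b
    rw [LinearMap.comp_apply, single_eq, map_smul, kappaInv_psi, map_smul, map_smul,
      kappa_psi, LinearMap.id_apply]
    rw [smul_smul, smul_smul, mul_assoc, inv_mul_cancel₀ u.ne_zero, mul_one]
  have h2 : kappaInv ∘ₗ kappa = LinearMap.id := by
    apply Finsupp.lhom_ext
    rintro ⟨l, u⟩ b
    rw [LinearMap.comp_apply, single_eq, map_smul, kappa_psi, map_smul, map_smul,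
      kappaInv_psi, LinearMap.id_apply]
    rw [smul_smul, smul_smul, mul_assoc, mul_inv_cancel₀ u.ne_zero, mul_one]
  have hz : ∀ k : ℕ, (q : ℂ) ^ ((1 : ℤ) - (k : ℤ)) = (q : ℂ) * ((q : ℂ) ^ k)⁻¹ := by
    intro k
    rw [zpow_sub₀ hq0, zpow_one, zpow_natCast, div_eq_mul_inv]
  have hq2 : (q : ℂ) ^ 2 - 1 ≠ 0 := sub_ne_zero.mpr (hq' 2 (by norm_num))
  have hqq1 : (q : ℂ) * q - 1 ≠ 0 := by
    intro h
    apply hq' 2 (by norm_num)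
    rw [sq]
    linear_combination h
  have hs : (q : ℂ) - (q : ℂ)⁻¹ = ((q : ℂ) ^ 2 - 1) / q := by
    field_simp
  refine ⟨h1, h2, ?_, ?_, ?_⟩
  · apply Finsupp.lhom_ext
    rintro ⟨l, u⟩ b
    simp only [LinearMap.sub_apply, LinearMap.comp_apply, LinearMap.smul_apply, single_eq,
      map_smul, map_sub, map_add, phi_psi, phi'_psi, kappa_psi, kappaInv_psi,
      Units.val_mul, Units.val_inv_eq_inv_val, Units.val_pow_eq_pow_val,
      mul_inv_cancel_left, inv_mul_cancel_left, smul_add, smul_sub, smul_smul]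
    have hu : (u : ℂ) ≠ 0 := u.ne_zero
    obtain _ | m := l
    · simp only [qnum, Nat.zero_sub, pow_zero, sub_self, zero_div, hz, inv_pow, hs]
      obtain ⟨c, hc⟩ : ∃ c : ℂ, c = (q : ℂ) ^ 2 - 1 := ⟨_, rfl⟩
      have hcne : c ≠ 0 := hc ▸ hq2
      rw [show ((q : ℂ) ^ 2 - 1) = c from hc.symm]
      match_scalars <;> (first
        | (field_simp [hcne, hu] <;> (try rw [hc]) <;> ring)
        | (field_simp [hcne, hu]
           rw [sub_eq_zero]
           try rw [neg_div, neg_div, neg_inj]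
           rw [div_eq_div_iff (by simp [mul_ne_zero_iff, pow_ne_zero_iff, hu, hq0, hcne]) (by simp [mul_ne_zero_iff, pow_ne_zero_iff, hu, hq0, hcne])]
           try rw [hc]
           ring)
        | (field_simp [hcne, hu]
           rw [div_sub_div _ _ (by simp [mul_ne_zero_iff, pow_ne_zero_iff, hu, hq0, hcne]) (by simp [mul_ne_zero_iff, pow_ne_zero_iff, hu, hq0, hcne]), div_mul_eq_mul_div, div_eq_iff (by simp [mul_ne_zero_iff, pow_ne_zero_iff, hu, hq0, hcne])]
           try rw [hc]
           ring))
    · have e1 : (q : ℂ) ^ (2 * m) = ((q : ℂ) ^ m) ^ 2 := by rw [mul_comm, pow_mul]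
      have e2 : (q : ℂ) ^ (2 * (m + 1)) = ((q : ℂ) ^ m) ^ 2 * (q : ℂ) ^ 2 := by
        rw [mul_comm, pow_mul]; ring
      have e4 : (q : ℂ) ^ (m + 1 + 1) = (q : ℂ) ^ m * q * q := by
        rw [pow_succ, pow_succ]
      have e3 : (q : ℂ) ^ (m + 1) = (q : ℂ) ^ m * q := pow_succ _ _
      simp only [Nat.succ_sub_one, qnum, hz, inv_pow, hs, e1, e2, e4, e3]
      have hx : ((q : ℂ) ^ m) ≠ 0 := pow_ne_zero _ hq0
      generalize (q : ℂ) ^ m = x at hx ⊢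
      obtain ⟨c, hc⟩ : ∃ c : ℂ, c = (q : ℂ) ^ 2 - 1 := ⟨_, rfl⟩
      have hcne : c ≠ 0 := hc ▸ hq2
      rw [show ((q : ℂ) ^ 2 - 1) = c from hc.symm]
      match_scalars
      · field_simp [hcne, hu, hx]
        ring
      · field_simp [hcne, hu, hx]
        ring
      · field_simp [hcne, hu, hx]
        rw [hc]; ring
  · apply Finsupp.lhom_ext
    rintro ⟨l, u⟩ b
    rw [LinearMap.comp_apply, LinearMap.smul_apply, LinearMap.comp_apply, single_eq,
      map_smul, map_smul]
    simp only [map_smul]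
    rw [kappa_psi]
    simp only [map_smul]
    rw [phi_psi]
    simp only [map_add, map_smul, kappa_psi, Units.val_mul, Units.val_pow_eq_pow_val,
      smul_smul, smul_add]
    module
  · apply Finsupp.lhom_ext
    rintro ⟨l, u⟩ b
    rw [LinearMap.comp_apply, LinearMap.smul_apply, LinearMap.comp_apply, single_eq,
      map_smul, map_smul]
    simp only [map_smul]
    rw [kappa_psi]
    simp only [map_smul]
    rw [phi'_psi]
    simp only [map_smul, kappa_psi, Units.val_mul, Units.val_inv_eq_inv_val,
      Units.val_pow_eq_pow_val, smul_smul]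
    congr 1
    field_simp


end
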